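/- For a separable state $\rho$, the EVM $\chi$ decomposes as a finite sum $\chi = \sum_m \chi^A_m \otimes \chi^B_m$, where each $\chi^A_m$ is the $|I| \times |I|$ positive semidefinite matrix with entries $\mathrm{Tr}(\sigma_m A_i^\dagger A_k)$ and each $\chi^B_m$ is the $|J| \times |J|$ positive semidefinite matrix with entries $\mathrm{Tr}(\tau_m B_j^\dagger B_l)$ (up to the weights $p_m$); in particular the EVM of a separable state has a separable (tensor-sum) structure. -/

import Mathlib

open Matrix
open scoped Kronecker ComplexOrder

lemma gram_psd {d ι : Type*} [Fintype d] [Fintype ι] [DecidableEq d]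
    (S : Matrix d d ℂ) (hS : S.PosSemidef) (M : ι → Matrix d d ℂ) :
    (Matrix.of fun i k => (S * ((M i)ᴴ * M k)).trace).PosSemidef := by
  obtain ⟨C, hC⟩ : ∃ C : Matrix d d ℂ, S = Cᴴ * C := by
    open scoped MatrixOrder Matrix.Norms.L2Operator in
    exact CStarAlgebra.nonneg_iff_eq_star_mul_self.mp hS.nonneg
  set V : Matrix (d × d) ι ℂ := Matrix.of fun ab i => (M i * Cᴴ) ab.1 ab.2 with hV
  have key : (Matrix.of fun i k => (S * ((M i)ᴴ * M k)).trace) = Vᴴ * V := by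
    ext i k
    have h1 : (S * ((M i)ᴴ * M k)).trace = ((M i * Cᴴ)ᴴ * (M k * Cᴴ)).trace := by
      rw [hC, mul_assoc, trace_mul_comm]
      congr 1
      simp [Matrix.conjTranspose_mul, Matrix.mul_assoc]
    simp only [Matrix.of_apply]
    rw [h1]
    simp only [Matrix.trace, Matrix.diag, Matrix.mul_apply,
      Matrix.conjTranspose_apply, hV, Matrix.of_apply, Fintype.sum_prod_type]
    rw [Finset.sum_comm]
  rw [key]
  exact Matrix.posSemidef_conjTranspose_mul_self V

/-- For a separable state `ρ = ∑ m, p m • (σ m ⊗ τ m)`, the EVM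
decomposes as `χ = ∑ m, p m • (χA m ⊗ χB m)` where
`(χA m) i k = Tr(σ m (A i)† (A k))` and `(χB m) j l = Tr(τ m (B j)† (B l))`
are positive semidefinite matrices; i.e. the EVM of a separable state has a
separable (tensor-sum) structure. -/
theorem evm_separable_structure
    {dA dB ι κ : Type*} [Fintype dA] [Fintype dB] [Fintype ι] [Fintype κ]
    [DecidableEq dA] [DecidableEq dB]
    (N : ℕ) (p : Fin N → ℝ) (hp : ∀ m, 0 ≤ p m)
    (σ : Fin N → Matrix dA dA ℂ) (hσ : ∀ m, (σ m).PosSemidef)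
    (τ : Fin N → Matrix dB dB ℂ) (hτ : ∀ m, (τ m).PosSemidef)
    (ρ : Matrix (dA × dB) (dA × dB) ℂ)
    (hρ : ρ = ∑ m : Fin N, (p m : ℂ) • (σ m ⊗ₖ τ m))
    (A : ι → Matrix dA dA ℂ) (B : κ → Matrix dB dB ℂ)
    (χ : Matrix (ι × κ) (ι × κ) ℂ)
    (hχ : ∀ i j k l, χ (i, j) (k, l) =
      (ρ * (((A i)ᴴ * A k) ⊗ₖ ((B j)ᴴ * B l))).trace)
    (χA : Fin N → Matrix ι ι ℂ)
    (hχA : ∀ m i k, χA m i k = (σ m * ((A i)ᴴ * A k)).trace)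
    (χB : Fin N → Matrix κ κ ℂ)
    (hχB : ∀ m j l, χB m j l = (τ m * ((B j)ᴴ * B l)).trace) :
    χ = ∑ m : Fin N, (p m : ℂ) • (χA m ⊗ₖ χB m) ∧
    (∀ m, (χA m).PosSemidef) ∧ (∀ m, (χB m).PosSemidef) := by
  refine ⟨?_, ?_, ?_⟩
  · ext ⟨i, j⟩ ⟨k, l⟩
    rw [hχ, hρ, Finset.sum_mul, Matrix.trace_sum]
    rw [Matrix.sum_apply]
    refine Finset.sum_congr rfl fun m _ => ?_
    rw [Matrix.smul_mul, Matrix.trace_smul]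
    simp only [← Matrix.mul_kronecker_mul]
    rw [Matrix.trace_kronecker, Matrix.smul_apply, Matrix.kroneckerMap_apply,
      hχA, hχB]
  · intro m
    have h := gram_psd (σ m) (hσ m) A
    have : χA m = Matrix.of fun i k => (σ m * ((A i)ᴴ * A k)).trace := by
      ext i k; rw [hχA]; rfl
    rw [this]; exact h
  · intro m
    have h := gram_psd (τ m) (hτ m) B
    have : χB m = Matrix.of fun j l => (τ m * ((B j)ᴴ * B l)).trace := by
      ext j l; rw [hχB]; rfl
    rw [this]; exact h
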